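/- Let A, κ ∈ ℝ with A ≠ 0, and let R : I → ℝ be differentiable on an open interval I. Suppose u : I → ℝ is differentiable with u'(θ) = A·u(θ)/(R(θ) − κ·u(θ)) and R(θ) − κ·u(θ) ≠ 0 on I. Then D := u' satisfies, wherever D is differentiable and R ≠ 0, the ODE A·D'(θ) = D³·κ²/R(θ) + D²·κ·(2A − R'(θ))/R(θ) + D·A·(A − R'(θ))/R(θ). -/

import Mathlib

theorem diffusivity_ode (a b A κ : ℝ) (hA : A ≠ 0) (R R' u : ℝ → ℝ)
    (hR : ∀ θ ∈ Set.Ioo a b, HasDerivAt R (R' θ) θ)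
    (hne : ∀ θ ∈ Set.Ioo a b, R θ - κ * u θ ≠ 0)
    (hu : ∀ θ ∈ Set.Ioo a b, HasDerivAt u (A * u θ / (R θ - κ * u θ)) θ) :
    ∀ θ ∈ Set.Ioo a b, R θ ≠ 0 → DifferentiableAt ℝ (deriv u) θ →
      A * deriv (deriv u) θ =
        (deriv u θ) ^ 3 * κ ^ 2 / R θ +
        (deriv u θ) ^ 2 * κ * (2 * A - R' θ) / R θ +
        (deriv u θ) * A * (A - R' θ) / R θ := by
  intro θ hθ hRθ _
  have hs := hne θ hθ
  have hu' := hu θ hθ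
  have hR' := hR θ hθ
  have hopen : Set.Ioo a b ∈ nhds θ := isOpen_Ioo.mem_nhds hθ
  have heq : deriv u =ᶠ[nhds θ] fun t => A * u t / (R t - κ * u t) := by
    filter_upwards [hopen] with t ht using (hu t ht).deriv
  have hnum : HasDerivAt (fun t => A * u t)
      (A * (A * u θ / (R θ - κ * u θ))) θ := hu'.const_mul A
  have hden : HasDerivAt (fun t => R t - κ * u t)
      (R' θ - κ * (A * u θ / (R θ - κ * u θ))) θ := hR'.sub (hu'.const_mul κ)
  have hDiv : HasDerivAt (fun t => A * u t / (R t - κ * u t))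
      ((A * (A * u θ / (R θ - κ * u θ)) * (R θ - κ * u θ) -
        A * u θ * (R' θ - κ * (A * u θ / (R θ - κ * u θ)))) / (R θ - κ * u θ) ^ 2) θ :=
    hnum.div hden hs
  have hD2 : HasDerivAt (deriv u)
      ((A * (A * u θ / (R θ - κ * u θ)) * (R θ - κ * u θ) -
        A * u θ * (R' θ - κ * (A * u θ / (R θ - κ * u θ)))) / (R θ - κ * u θ) ^ 2) θ :=
    hDiv.congr_of_eventuallyEq heq
  rw [hD2.deriv, hu'.deriv]
  have hs' : R θ - u θ * κ ≠ 0 := by rwa [mul_comm] at hs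
  field_simp
  ring
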